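/- Let X := {x : ℤ → ℝ | x is bounded and ∑_{k=1}^∞ x(−k)/2^k = lim_{i→+∞} x(i)} (in particular the limit of x(i) as i → +∞ exists and equals the sum of the absolutely convergent series ∑_{k=1}^∞ x(−k)/2^k), ordered pointwise. Then for all b, c ∈ X with 0 < b, 0 < c (i.e. b and c are pointwise nonnegative and nonzero) such that there exists j ∈ ℤ with b(j) > 0 and c(j) > 0, there exists x ∈ X with 0 < x, x ≤ b and x ≤ c (all inequalities pointwise). Consequently X is weakly pervasive. -/

import Mathlib

open Filter Topology

/-- Membership in the pre-Riesz space `X` of Example 10: bounded functions `x : ℤ → ℝ` such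
that `∑_{k=1}^∞ x(-k)/2^k = lim_{i→∞} x(i)` (in particular this limit exists). -/
def MemX10 (x : ℤ → ℝ) : Prop :=
  (∃ M : ℝ, ∀ i : ℤ, |x i| ≤ M) ∧
    Tendsto x atTop (𝓝 (∑' k : ℕ, x (-((k : ℤ) + 1)) / 2 ^ (k + 1)))

lemma summable_aux10 (b : ℤ → ℝ) (M : ℝ) (hM : ∀ i, |b i| ≤ M) :
    Summable (fun k : ℕ => b (-((k : ℤ) + 1)) / 2 ^ (k + 1)) := by
  apply Summable.of_norm
  have key : ∀ k : ℕ, ‖b (-((k : ℤ) + 1)) / 2 ^ (k + 1)‖ ≤ (M / 2) * (1 / 2) ^ k := by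
    intro k
    have h2 : (0:ℝ) < 2 ^ (k + 1) := by positivity
    rw [Real.norm_eq_abs, abs_div, abs_of_pos h2]
    have he : (M / 2) * (1 / 2) ^ k = M / 2 ^ (k + 1) := by
      rw [pow_succ]; field_simp; rw [mul_assoc, ← mul_pow]; norm_num
    rw [he]
    gcongr
    exact hM _
  exact Summable.of_nonneg_of_le (fun k => norm_nonneg _) key
    (summable_geometric_two.mul_left _)

/-- For all `b, c ∈ X` with `0 < b`, `0 < c` (pointwise) such that
`b(j) > 0` and `c(j) > 0` for some `j ∈ ℤ`, there exists `x ∈ X` with `0 < x`, `x ≤ b`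
and `x ≤ c`.  Consequently `X` is weakly pervasive. -/
theorem statement10 :
    ∀ b c : ℤ → ℝ, MemX10 b → MemX10 c → 0 < b → 0 < c →
      (∃ j : ℤ, 0 < b j ∧ 0 < c j) →
      ∃ x : ℤ → ℝ, MemX10 x ∧ 0 < x ∧ x ≤ b ∧ x ≤ c := by
  rintro b c ⟨⟨Mb, hMb⟩, hb2⟩ ⟨⟨Mc, hMc⟩, hc2⟩ hb0 hc0 ⟨j, hbj, hcj⟩
  have hbnn : ∀ i, 0 ≤ b i := fun i => hb0.le i
  have hcnn : ∀ i, 0 ≤ c i := fun i => hc0.le i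
  set m := min (b j) (c j) with hm
  have hm0 : 0 < m := lt_min hbj hcj
  have hmb : m ≤ b j := min_le_left _ _
  have hmc : m ≤ c j := min_le_right _ _
  by_cases hj : 0 ≤ j
  · refine ⟨fun i => if i = j then m else 0, ⟨⟨m, fun i => ?_⟩, ?_⟩, ?_, fun i => ?_, fun i => ?_⟩
    · dsimp only; split <;> simp [abs_of_pos hm0, hm0.le]
    · have hz : ∀ k : ℕ, (if -((k : ℤ) + 1) = j then m else 0) / 2 ^ (k + 1) = 0 := by
        intro k; rw [if_neg (by omega)]; simp
      rw [tsum_congr hz, tsum_zero]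
      refine tendsto_const_nhds.congr' ?_
      rw [EventuallyEq, eventually_atTop]
      exact ⟨j + 1, fun i hi => by rw [if_neg (by omega)]⟩
    · rw [Pi.lt_def]
      exact ⟨fun i => by dsimp only; split <;> simp [hm0.le], j, by simp [hm0]⟩
    · dsimp only; split
      · next h => rw [h]; exact hmb
      · exact hbnn i
    · dsimp only; split
      · next h => rw [h]; exact hmc
      · exact hcnn i
  · push_neg at hj
    set k₀ := (-j - 1).toNat with hk₀def
    have hcast : ((k₀ : ℤ)) = -j - 1 := Int.toNat_of_nonneg (by omega)
    have hk₀ : j = -((k₀ : ℤ) + 1) := by omega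
    set ε := (m / 2) / 2 ^ (k₀ + 1) with hεdef
    have h2p : (0:ℝ) < 2 ^ (k₀ + 1) := by positivity
    have hε0 : 0 < ε := by positivity
    have hεm : ε ≤ m / 2 := div_le_self (by positivity) (one_le_pow₀ one_le_two)
    have hLb : ε < ∑' k : ℕ, b (-((k : ℤ) + 1)) / 2 ^ (k + 1) := by
      have h1 := Summable.le_tsum (summable_aux10 b Mb hMb) k₀
        (fun k _ => div_nonneg (hbnn _) (by positivity))
      have h2 : ε < b (-((k₀ : ℤ) + 1)) / 2 ^ (k₀ + 1) := by
        rw [← hk₀, hεdef]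
        exact (div_lt_div_iff_of_pos_right h2p).mpr (by linarith)
      linarith
    have hLc : ε < ∑' k : ℕ, c (-((k : ℤ) + 1)) / 2 ^ (k + 1) := by
      have h1 := Summable.le_tsum (summable_aux10 c Mc hMc) k₀
        (fun k _ => div_nonneg (hcnn _) (by positivity))
      have h2 : ε < c (-((k₀ : ℤ) + 1)) / 2 ^ (k₀ + 1) := by
        rw [← hk₀, hεdef]
        exact (div_lt_div_iff_of_pos_right h2p).mpr (by linarith)
      linarith
    obtain ⟨Nb, hNb⟩ := eventually_atTop.mp (hb2.eventually (eventually_gt_nhds hLb))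
    obtain ⟨Nc, hNc⟩ := eventually_atTop.mp (hc2.eventually (eventually_gt_nhds hLc))
    set N := max (max Nb Nc) 0 with hN
    have hN0 : (0:ℤ) ≤ N := le_max_right _ _
    refine ⟨fun i => if i = j then m / 2 else if N ≤ i then ε else 0,
      ⟨⟨m, fun i => ?_⟩, ?_⟩, ?_, fun i => ?_, fun i => ?_⟩
    · dsimp only
      split
      · rw [abs_of_pos (by positivity)]; linarith
      split
      · rw [abs_of_pos hε0]; linarith
      · simp [hm0.le]
    · have hts : (∑' k : ℕ, (if -((k : ℤ) + 1) = j then m / 2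
          else if N ≤ -((k : ℤ) + 1) then ε else 0) / 2 ^ (k + 1)) = ε := by
        rw [tsum_eq_single k₀ (fun k hk => by
          rw [if_neg (by omega), if_neg (by omega)]; simp)]
        rw [if_pos (by omega)]
      rw [hts]
      refine tendsto_const_nhds.congr' ?_
      rw [EventuallyEq, eventually_atTop]
      refine ⟨N, fun i hi => ?_⟩
      rw [if_neg (by omega), if_pos hi]
    · rw [Pi.lt_def]
      refine ⟨fun i => ?_, j, ?_⟩
      · dsimp only; split
        · positivity
        split
        · exact hε0.le
        · exact le_refl _
      · simp only [Pi.zero_apply, if_pos rfl, if_true, eq_self_iff_true]; linarith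
    · dsimp only; split
      · next h => rw [h]; linarith
      split
      · next h _ => exact (hNb i (le_trans (le_trans (le_max_left _ _) (le_max_left _ _)) ‹N ≤ i›)).le
      · exact hbnn i
    · dsimp only; split
      · next h => rw [h]; linarith
      split
      · next h _ => exact (hNc i (le_trans (le_trans (le_max_right _ _) (le_max_left _ _)) ‹N ≤ i›)).le
      · exact hcnn i
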